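/- arXiv:1808.01817 — 2 statements merged into one kernel-verified Lean document; each statement's English description precedes it below -/
import Mathlib

section
/- For all n ≥ 2, 0 ≤ α ≤ 1, ρ > 0 and x ∈ [0,1], the first moment of the generalized Bernstein–Durrmeyer operator is G_{n,ρ}^{(α)}(e₁; x) = (nρ x + 1)/(nρ + 2), where e₁(t) = t. -/
open MeasureTheory Filter Finset Real

/-- Generalized Bernstein basis function `p_{n,k}^{(α)}(x)` (polynomial form). -/
noncomputable def bernP (n k : ℕ) (α x : ℝ) : ℝ :=
  ((n - 2).choose k : ℝ) * (1 - α) * x ^ k * (1 - x) ^ (n - k - 1)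
    + (if 2 ≤ k then (((n - 2).choose (k - 2)) : ℝ) else 0) * (1 - α) * x ^ (k - 1) * (1 - x) ^ (n - k)
    + (n.choose k : ℝ) * α * x ^ k * (1 - x) ^ (n - k)

/-- Euler Beta function. -/
noncomputable def betaR (e f : ℝ) : ℝ := Real.Gamma e * Real.Gamma f / Real.Gamma (e + f)

/-- The Beta density `μ_{n,ρ,k}`. -/
noncomputable def muD (n k : ℕ) (ρ t : ℝ) : ℝ :=
  t ^ ((k : ℝ) * ρ) * (1 - t) ^ (((n : ℝ) - (k : ℝ)) * ρ) /
    betaR ((k : ℝ) * ρ + 1) (((n : ℝ) - (k : ℝ)) * ρ + 1)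

/-- The generalized Bernstein–Durrmeyer operator. -/
noncomputable def G (n : ℕ) (α ρ : ℝ) (f : ℝ → ℝ) (x : ℝ) : ℝ :=
  ∑ k ∈ Finset.range (n + 1), bernP n k α x * ∫ t in (0:ℝ)..1, muD n k ρ t * f t

lemma betaR_integral (a b : ℝ) (ha : 0 < a) (hb : 0 < b) :
    ∫ t in (0:ℝ)..1, t ^ (a - 1) * (1 - t) ^ (b - 1) = betaR a b := by
  have h := Complex.Gamma_mul_Gamma_eq_betaIntegral (s := (a : ℂ)) (t := (b : ℂ))
    (by simpa using ha) (by simpa using hb)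
  have key : Complex.betaIntegral a b =
      ((∫ t in (0:ℝ)..1, t ^ (a - 1) * (1 - t) ^ (b - 1) : ℝ) : ℂ) := by
    rw [Complex.betaIntegral, ← intervalIntegral.integral_ofReal]
    apply intervalIntegral.integral_congr
    intro t ht
    rw [Set.uIcc_of_le zero_le_one] at ht
    simp only []
    rw [show ((a:ℂ) - 1) = ((a - 1 : ℝ) : ℂ) by push_cast; ring,
      show ((b:ℂ) - 1) = ((b - 1 : ℝ) : ℂ) by push_cast; ring,
      show ((1:ℂ) - (t:ℂ)) = ((1 - t : ℝ) : ℂ) by push_cast; ring,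
      ← Complex.ofReal_cpow ht.1, ← Complex.ofReal_cpow (by linarith [ht.2]),
      ← Complex.ofReal_mul]
  rw [key] at h
  have hG : Real.Gamma a * Real.Gamma b =
      Real.Gamma (a + b) * ∫ t in (0:ℝ)..1, t ^ (a - 1) * (1 - t) ^ (b - 1) := by
    have := h
    rw [← Complex.ofReal_add, Complex.Gamma_ofReal, Complex.Gamma_ofReal,
      Complex.Gamma_ofReal] at this
    exact_mod_cast this
  have hne : Real.Gamma (a + b) ≠ 0 := (Real.Gamma_pos_of_pos (by linarith)).ne'
  rw [betaR, eq_div_iff hne, mul_comm]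
  exact hG.symm

lemma betaR_pos {a b : ℝ} (ha : 0 < a) (hb : 0 < b) : 0 < betaR a b :=
  div_pos (mul_pos (Real.Gamma_pos_of_pos ha) (Real.Gamma_pos_of_pos hb))
    (Real.Gamma_pos_of_pos (by linarith))

lemma moment (n k : ℕ) (hk : k ≤ n) (ρ : ℝ) (hρ : 0 < ρ) :
    ∫ t in (0:ℝ)..1, muD n k ρ t * t = ((k : ℝ) * ρ + 1) / ((n : ℝ) * ρ + 2) := by
  set a : ℝ := (k : ℝ) * ρ with ha_def
  set b : ℝ := ((n : ℝ) - (k : ℝ)) * ρ with hb_def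
  have ha : 0 ≤ a := mul_nonneg (Nat.cast_nonneg k) hρ.le
  have hb : 0 ≤ b := mul_nonneg (sub_nonneg.2 (Nat.cast_le.2 hk)) hρ.le
  have hab : a + b = (n : ℝ) * ρ := by rw [ha_def, hb_def]; ring
  have hBpos : 0 < betaR (a + 1) (b + 1) := betaR_pos (by linarith) (by linarith)
  have hcong : ∀ t ∈ Set.uIcc (0:ℝ) 1,
      muD n k ρ t * t = t ^ ((a + 2) - 1) * (1 - t) ^ ((b + 1) - 1) * (betaR (a+1) (b+1))⁻¹ := by
    intro t ht
    rw [Set.uIcc_of_le zero_le_one] at ht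
    rw [muD]
    rcases eq_or_lt_of_le ht.1 with h0 | h0
    · rw [← h0]
      rw [Real.zero_rpow (ne_of_gt (show (0:ℝ) < (a + 2) - 1 by linarith))]
      ring
    · rw [show (a + 2) - 1 = a + 1 by ring, Real.rpow_add h0, Real.rpow_one,
        show (b + 1) - 1 = b by ring]
      simp only [ha_def, hb_def]
      rw [div_eq_mul_inv]
      ring
  rw [intervalIntegral.integral_congr hcong, intervalIntegral.integral_mul_const,
    betaR_integral _ _ (by linarith) (by linarith)]
  have h1 : betaR (a + 2) (b + 1) = (a + 1) / (a + b + 2) * betaR (a + 1) (b + 1) := by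
    have hA : Real.Gamma (a + 2) = (a + 1) * Real.Gamma (a + 1) := by
      rw [show a + 2 = (a + 1) + 1 by ring, Real.Gamma_add_one (by linarith)]
    have hD : Real.Gamma (a + b + 3) = (a + b + 2) * Real.Gamma (a + b + 2) := by
      rw [show a + b + 3 = (a + b + 2) + 1 by ring, Real.Gamma_add_one (by linarith)]
    have g1 : (0:ℝ) < Real.Gamma (a + b + 2) := Real.Gamma_pos_of_pos (by linarith)
    rw [betaR, betaR, show a + 2 + (b + 1) = a + b + 3 by ring,
      show a + 1 + (b + 1) = a + b + 2 by ring, hA, hD]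
    field_simp
  rw [h1, hab]
  field_simp

lemma sum1 (m : ℕ) (x : ℝ) :
    ∑ k ∈ Finset.range (m + 1), (m.choose k : ℝ) * x ^ k * (1 - x) ^ (m - k) = 1 := by
  have h := congrArg (Polynomial.eval x) (bernsteinPolynomial.sum ℝ m)
  simpa [bernsteinPolynomial, Polynomial.eval_finset_sum, mul_comm, mul_assoc, mul_left_comm]
    using h

lemma sum2 (m : ℕ) (x : ℝ) :
    ∑ k ∈ Finset.range (m + 1), (k : ℝ) * ((m.choose k : ℝ) * x ^ k * (1 - x) ^ (m - k))
      = (m : ℝ) * x := by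
  have h := congrArg (Polynomial.eval x) (bernsteinPolynomial.sum_smul ℝ m)
  simpa [bernsteinPolynomial, Polynomial.eval_finset_sum, mul_comm, mul_assoc, mul_left_comm]
    using h

lemma sumW (m : ℕ) (x c d : ℝ) :
    ∑ k ∈ Finset.range (m + 1),
        (c * (k : ℝ) + d) * ((m.choose k : ℝ) * x ^ k * (1 - x) ^ (m - k))
      = c * (m : ℝ) * x + d := by
  have : ∀ k ∈ Finset.range (m + 1),
      (c * (k : ℝ) + d) * ((m.choose k : ℝ) * x ^ k * (1 - x) ^ (m - k))
        = c * ((k : ℝ) * ((m.choose k : ℝ) * x ^ k * (1 - x) ^ (m - k)))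
          + d * ((m.choose k : ℝ) * x ^ k * (1 - x) ^ (m - k)) := by
    intro k _; ring
  rw [Finset.sum_congr rfl this, Finset.sum_add_distrib, ← Finset.mul_sum, ← Finset.mul_sum,
    sum1, sum2, mul_one, mul_assoc]

lemma lemP1 (m : ℕ) (ρ x : ℝ) :
    ∑ k ∈ Finset.range (m + 3),
        (ρ * (k : ℝ) + 1) * ((m.choose k : ℝ) * x ^ k * (1 - x) ^ (m + 1 - k))
      = (1 - x) * (ρ * (m : ℝ) * x + 1) := by
  rw [Finset.sum_range_succ, Finset.sum_range_succ]
  rw [Nat.choose_eq_zero_of_lt (by omega), Nat.choose_eq_zero_of_lt (by omega)]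
  have hcong : ∀ k ∈ Finset.range (m + 1),
      (ρ * (k : ℝ) + 1) * ((m.choose k : ℝ) * x ^ k * (1 - x) ^ (m + 1 - k))
        = (1 - x) * ((ρ * (k : ℝ) + 1) * ((m.choose k : ℝ) * x ^ k * (1 - x) ^ (m - k))) := by
    intro k hk
    rw [Finset.mem_range] at hk
    rw [show m + 1 - k = (m - k) + 1 by omega, pow_succ]
    ring
  rw [Finset.sum_congr rfl hcong, ← Finset.mul_sum, sumW]
  push_cast
  ring

lemma lemP2 (m : ℕ) (ρ x : ℝ) :
    ∑ k ∈ Finset.range (m + 3),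
        (ρ * (k : ℝ) + 1) * ((if 2 ≤ k then ((m.choose (k - 2)) : ℝ) else 0)
          * x ^ (k - 1) * (1 - x) ^ (m + 2 - k))
      = x * (ρ * (m : ℝ) * x + 2 * ρ + 1) := by
  rw [Finset.sum_range_succ', Finset.sum_range_succ']
  simp only [if_neg (by omega : ¬ 2 ≤ 0), if_neg (by omega : ¬ 2 ≤ 0 + 1)]
  have hcong : ∀ k ∈ Finset.range (m + 1),
      (ρ * ((k + 1 + 1 : ℕ) : ℝ) + 1) * ((if 2 ≤ k + 1 + 1 then ((m.choose (k + 1 + 1 - 2)) : ℝ) else 0)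
          * x ^ (k + 1 + 1 - 1) * (1 - x) ^ (m + 2 - (k + 1 + 1)))
        = x * (((ρ * (k : ℝ) + (2 * ρ + 1))) * ((m.choose k : ℝ) * x ^ k * (1 - x) ^ (m - k))) := by
    intro k hk
    rw [Finset.mem_range] at hk
    rw [if_pos (by omega : 2 ≤ k + 1 + 1), show k + 1 + 1 - 2 = k by omega,
      show k + 1 + 1 - 1 = k + 1 by omega, show m + 2 - (k + 1 + 1) = m - k by omega, pow_succ]
    push_cast
    ring
  rw [Finset.sum_congr rfl hcong, ← Finset.mul_sum, sumW]
  push_cast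
  ring

lemma keySum (m : ℕ) (α ρ x : ℝ) :
    ∑ k ∈ Finset.range (m + 3), (ρ * (k : ℝ) + 1) * bernP (m + 2) k α x
      = ρ * ((m : ℝ) + 2) * x + 1 := by
  have hcong : ∀ k ∈ Finset.range (m + 3),
      (ρ * (k : ℝ) + 1) * bernP (m + 2) k α x
        = (1 - α) * ((ρ * (k : ℝ) + 1) * ((m.choose k : ℝ) * x ^ k * (1 - x) ^ (m + 1 - k)))
          + (1 - α) * ((ρ * (k : ℝ) + 1) * ((if 2 ≤ k then ((m.choose (k - 2)) : ℝ) else 0)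
              * x ^ (k - 1) * (1 - x) ^ (m + 2 - k)))
          + (ρ * (k : ℝ) + 1) * (((m + 2).choose k : ℝ) * x ^ k * (1 - x) ^ (m + 2 - k)) * α := by
    intro k hk
    rw [bernP, show m + 2 - 2 = m by omega, show m + 2 - k - 1 = m + 1 - k by omega]
    ring
  rw [Finset.sum_congr rfl hcong, Finset.sum_add_distrib, Finset.sum_add_distrib,
    ← Finset.mul_sum, ← Finset.mul_sum, ← Finset.sum_mul, lemP1, lemP2,
    show m + 3 = (m + 2) + 1 by omega, sumW]
  push_cast
  ring

theorem G_e1 (n : ℕ) (hn : 2 ≤ n) (α ρ : ℝ)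
    (hα : α ∈ Set.Icc (0:ℝ) 1) (hρ : 0 < ρ) (x : ℝ) (hx : x ∈ Set.Icc (0:ℝ) 1) :
    G n α ρ (fun t => t) x = ((n : ℝ) * ρ * x + 1) / ((n : ℝ) * ρ + 2) := by
  obtain ⟨m, rfl⟩ := Nat.exists_eq_add_of_le hn
  rw [show 2 + m = m + 2 by omega]
  rw [G]
  have hcong : ∀ k ∈ Finset.range (m + 2 + 1),
      bernP (m + 2) k α x * ∫ t in (0:ℝ)..1, muD (m + 2) k ρ t * (fun t => t) t
        = (ρ * (k : ℝ) + 1) * bernP (m + 2) k α x / (((m : ℝ) + 2) * ρ + 2) := by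
    intro k hk
    rw [Finset.mem_range] at hk
    simp only []
    rw [moment (m + 2) k (by omega) ρ hρ]
    push_cast
    ring
  rw [Finset.sum_congr rfl hcong, ← Finset.sum_div, show m + 2 + 1 = m + 3 by omega, keySum]
  push_cast
  ring
end

section
/- (Korovkin-type convergence) For every continuous f : [0,1] → ℝ, fixed 0 ≤ α ≤ 1 and ρ > 0, the generalized Bernstein–Durrmeyer operators converge uniformly: G_{n,ρ}^{(α)}(f; ·) → f uniformly on [0,1] as n → ∞. -/
open MeasureTheory Filter Finset Real

noncomputable def bb (m j : ℕ) (x : ℝ) : ℝ := (m.choose j : ℝ) * x ^ j * (1 - x) ^ (m - j)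

lemma bb_eval (m j : ℕ) (x : ℝ) : bb m j x = (bernsteinPolynomial ℝ m j).eval x := by
  simp [bb, bernsteinPolynomial]

lemma sum_bb (m : ℕ) (x : ℝ) : ∑ j ∈ range (m + 1), bb m j x = 1 := by
  simp_rw [bb_eval]
  rw [← Polynomial.eval_finset_sum, bernsteinPolynomial.sum]
  simp

lemma sum_k_bb (m : ℕ) (x : ℝ) : ∑ j ∈ range (m + 1), (j : ℝ) * bb m j x = m * x := by
  simp_rw [bb_eval]
  have := congrArg (Polynomial.eval x) (bernsteinPolynomial.sum_smul ℝ m)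
  rw [Polynomial.eval_finset_sum] at this
  simpa [nsmul_eq_mul] using this

lemma sum_k2_bb (m : ℕ) (x : ℝ) :
    ∑ j ∈ range (m + 1), (j : ℝ) ^ 2 * bb m j x = (m : ℝ) * ((m:ℝ) - 1) * x ^ 2 + m * x := by
  have h1 := congrArg (Polynomial.eval x) (bernsteinPolynomial.sum_mul_smul ℝ m)
  rw [Polynomial.eval_finset_sum] at h1
  simp only [nsmul_eq_mul, Polynomial.eval_mul, Polynomial.eval_natCast, Polynomial.eval_pow,
    Polynomial.eval_X] at h1
  have h2 := sum_k_bb m x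
  have key : ∑ j ∈ range (m + 1), ((j:ℝ) * ((j:ℝ) - 1)) * bb m j x
      = (m : ℝ) * ((m:ℝ) - 1) * x ^ 2 := by
    have cast1 : ∀ j : ℕ, ((j * (j-1) : ℕ) : ℝ) = (j:ℝ) * ((j:ℝ) - 1) := by
      rintro (_ | j)
      · simp
      · push_cast [Nat.succ_sub_one]; ring
    calc ∑ j ∈ range (m + 1), ((j:ℝ) * ((j:ℝ) - 1)) * bb m j x
        = ∑ j ∈ range (m + 1), ((j * (j-1) : ℕ) : ℝ) * (bernsteinPolynomial ℝ m j).eval x := by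
          refine Finset.sum_congr rfl fun j _ => by rw [cast1, bb_eval]
      _ = ((m * (m-1) : ℕ) : ℝ) * x ^ 2 := by rw [← h1]
      _ = (m : ℝ) * ((m:ℝ) - 1) * x ^ 2 := by rw [cast1]
  have expand : ∀ j : ℕ, (j:ℝ)^2 * bb m j x = ((j:ℝ) * ((j:ℝ)-1)) * bb m j x + (j:ℝ) * bb m j x := by
    intro j; ring
  simp_rw [expand, Finset.sum_add_distrib, key, h2]

lemma betaR_pos_s12 {e f : ℝ} (he : 0 < e) (hf : 0 < f) : 0 < betaR e f := by
  have := Real.Gamma_pos_of_pos he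
  have := Real.Gamma_pos_of_pos hf
  have := Real.Gamma_pos_of_pos (add_pos he hf)
  exact div_pos (by positivity) ‹0 < Real.Gamma (e + f)›

lemma beta_integral (a b : ℝ) (ha : 0 ≤ a) (hb : 0 ≤ b) :
    ∫ t in (0:ℝ)..1, t ^ a * (1 - t) ^ b = betaR (a + 1) (b + 1) := by
  have ha1 : (0:ℝ) < a + 1 := by linarith
  have hb1 : (0:ℝ) < b + 1 := by linarith
  have key := Complex.Gamma_mul_Gamma_eq_betaIntegral
    (s := (a:ℂ) + 1) (t := (b:ℂ) + 1) (by simpa using ha1) (by simpa using hb1)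
  have hBI : Complex.betaIntegral ((a:ℂ)+1) ((b:ℂ)+1)
      = ((∫ t in (0:ℝ)..1, t ^ a * (1 - t) ^ b : ℝ) : ℂ) := by
    rw [Complex.betaIntegral]
    rw [← intervalIntegral.integral_ofReal]
    apply intervalIntegral.integral_congr
    intro t ht
    rw [Set.uIcc_of_le (by norm_num : (0:ℝ) ≤ 1)] at ht
    obtain ⟨ht0, ht1⟩ := ht
    have h1t : (0:ℝ) ≤ 1 - t := by linarith
    simp only [add_sub_cancel_right]
    push_cast
    rw [show (1 - (t:ℂ)) = ((1-t:ℝ):ℂ) by push_cast; ring,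
      ← Complex.ofReal_cpow ht0, ← Complex.ofReal_cpow h1t]
  rw [hBI] at key
  have hg : ∀ x : ℝ, Complex.Gamma ((x:ℂ)) = (Real.Gamma x : ℂ) := fun x =>
    Complex.Gamma_ofReal x
  have key2 : ((Real.Gamma (a+1) * Real.Gamma (b+1) : ℝ) : ℂ)
      = ((Real.Gamma (a+1+(b+1)) * ∫ t in (0:ℝ)..1, t ^ a * (1 - t) ^ b : ℝ) : ℂ) := by
    push_cast
    rw [← hg, ← hg, ← hg]
    convert key using 3 <;> push_cast <;> ring
  have key3 := Complex.ofReal_injective key2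
  have hΓ : 0 < Real.Gamma (a+1+(b+1)) := Real.Gamma_pos_of_pos (by linarith)
  rw [betaR]
  rw [eq_div_iff (ne_of_gt hΓ)] at *
  rw [key3]; ring

lemma betaR_succ (a b : ℝ) (ha : 0 ≤ a) (hb : 0 ≤ b) :
    betaR (a + 2) (b + 1) = (a + 1) / (a + b + 2) * betaR (a + 1) (b + 1) := by
  have h1 : Real.Gamma (a + 2) = (a + 1) * Real.Gamma (a + 1) := by
    have := Real.Gamma_add_one (s := a + 1) (by positivity)
    convert this using 2 <;> ring
  have h2 : Real.Gamma (a + 2 + (b + 1)) = (a + b + 2) * Real.Gamma (a + 1 + (b + 1)) := by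
    have := Real.Gamma_add_one (s := a + b + 2) (by positivity)
    have e1 : a + 2 + (b + 1) = a + b + 2 + 1 := by ring
    have e2 : a + 1 + (b + 1) = a + b + 2 := by ring
    rw [e1, e2, this]
  have hΓ : 0 < Real.Gamma (a + 1 + (b + 1)) := Real.Gamma_pos_of_pos (by linarith)
  have hab : (0:ℝ) < a + b + 2 := by linarith
  rw [betaR, betaR, h1, h2]
  field_simp

lemma rpow_mul_self (a : ℝ) (ha : 0 ≤ a) {t : ℝ} (ht : 0 ≤ t) : t ^ a * t = t ^ (a + 1) := by
  rcases eq_or_lt_of_le ht with h | h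
  · rw [← h, mul_zero, Real.zero_rpow (by positivity : (0:ℝ) < a + 1).ne']
  · rw [Real.rpow_add_one (ne_of_gt h)]

lemma rpow_pow_aux (a b : ℝ) (ha : 0 ≤ a) {t : ℝ} (ht : 0 ≤ t) (m : ℕ) :
    t ^ a * (1 - t) ^ b * t ^ m = t ^ (a + m) * (1 - t) ^ b := by
  induction m with
  | zero => simp
  | succ m ih =>
      have h1 : t ^ (a + ↑(m+1)) = t ^ (a + m) * t := by
        rw [rpow_mul_self _ (by positivity) ht]; push_cast; ring_nf
      rw [h1, pow_succ, ← mul_assoc, ih]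
      ring

section
variable {n k : ℕ} {ρ : ℝ}

lemma muD_integral_pow (hk : k ≤ n) (hρ : 0 < ρ) (m : ℕ) :
    ∫ t in (0:ℝ)..1, muD n k ρ t * t ^ m
      = betaR ((k:ℝ)*ρ + m + 1) (((n:ℝ)-(k:ℝ))*ρ + 1) / betaR ((k:ℝ)*ρ + 1) (((n:ℝ)-(k:ℝ))*ρ + 1) := by
  have ha : (0:ℝ) ≤ (k:ℝ)*ρ := by positivity
  have hb : (0:ℝ) ≤ ((n:ℝ)-(k:ℝ))*ρ := by
    have : (k:ℝ) ≤ (n:ℝ) := Nat.cast_le.mpr hk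
    nlinarith
  have key : ∫ t in (0:ℝ)..1, t ^ ((k:ℝ)*ρ + m) * (1-t) ^ (((n:ℝ)-(k:ℝ))*ρ)
      = betaR ((k:ℝ)*ρ + m + 1) (((n:ℝ)-(k:ℝ))*ρ + 1) := by
    rw [beta_integral _ _ (by positivity) hb]
  rw [← key]
  simp_rw [muD, div_mul_eq_mul_div, intervalIntegral.integral_div]
  congr 1
  apply intervalIntegral.integral_congr
  intro t ht
  rw [Set.uIcc_of_le (by norm_num : (0:ℝ) ≤ 1)] at ht
  simp only []
  exact rpow_pow_aux _ _ ha ht.1 m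

lemma muD_m0 (hk : k ≤ n) (hρ : 0 < ρ) : ∫ t in (0:ℝ)..1, muD n k ρ t = 1 := by
  have := muD_integral_pow hk hρ 0
  simp only [pow_zero, mul_one, Nat.cast_zero, add_zero] at this
  rw [this]
  have hB : 0 < betaR ((k:ℝ)*ρ + 1) (((n:ℝ)-(k:ℝ))*ρ + 1) := by
    apply betaR_pos_s12 (by positivity)
    have : (k:ℝ) ≤ (n:ℝ) := Nat.cast_le.mpr hk
    nlinarith
  exact div_self (ne_of_gt hB)

lemma muD_m1 (hk : k ≤ n) (hρ : 0 < ρ) :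
    ∫ t in (0:ℝ)..1, muD n k ρ t * t = ((k:ℝ)*ρ + 1) / ((n:ℝ)*ρ + 2) := by
  have hkn : (k:ℝ) ≤ (n:ℝ) := Nat.cast_le.mpr hk
  have ha : (0:ℝ) ≤ (k:ℝ)*ρ := by positivity
  have hb : (0:ℝ) ≤ ((n:ℝ)-(k:ℝ))*ρ := by nlinarith
  have hB : 0 < betaR ((k:ℝ)*ρ + 1) (((n:ℝ)-(k:ℝ))*ρ + 1) :=
    betaR_pos_s12 (by positivity) (by linarith)
  have h := muD_integral_pow hk hρ 1
  simp only [pow_one, Nat.cast_one] at h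
  rw [h, show (k:ℝ)*ρ + 1 + 1 = (k:ℝ)*ρ + 2 from by ring,
    betaR_succ _ _ ha hb, show (k:ℝ)*ρ + ((n:ℝ)-(k:ℝ))*ρ + 2 = (n:ℝ)*ρ + 2 from by ring,
    mul_div_assoc, div_self (ne_of_gt hB), mul_one]

lemma muD_m2 (hk : k ≤ n) (hρ : 0 < ρ) :
    ∫ t in (0:ℝ)..1, muD n k ρ t * t ^ 2
      = ((k:ℝ)*ρ + 1) * ((k:ℝ)*ρ + 2) / (((n:ℝ)*ρ + 2) * ((n:ℝ)*ρ + 3)) := by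
  have hkn : (k:ℝ) ≤ (n:ℝ) := Nat.cast_le.mpr hk
  have ha : (0:ℝ) ≤ (k:ℝ)*ρ := by positivity
  have hb : (0:ℝ) ≤ ((n:ℝ)-(k:ℝ))*ρ := by nlinarith
  have hB : 0 < betaR ((k:ℝ)*ρ + 1) (((n:ℝ)-(k:ℝ))*ρ + 1) :=
    betaR_pos_s12 (by positivity) (by linarith)
  have h := muD_integral_pow hk hρ 2
  push_cast at h
  rw [h, show (k:ℝ)*ρ + 2 + 1 = ((k:ℝ)*ρ + 1) + 2 from by push_cast; ring,
    betaR_succ _ _ (by linarith) hb,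
    show (k:ℝ)*ρ + 1 + 1 = (k:ℝ)*ρ + 2 from by ring,
    betaR_succ _ _ ha hb,
    show (k:ℝ)*ρ + 1 + ((n:ℝ)-(k:ℝ))*ρ + 2 = (n:ℝ)*ρ + 3 from by ring,
    show (k:ℝ)*ρ + ((n:ℝ)-(k:ℝ))*ρ + 2 = (n:ℝ)*ρ + 2 from by ring]
  have hd2 : ((n:ℝ)*ρ + 2) ≠ 0 := by positivity
  have hd3 : ((n:ℝ)*ρ + 3) ≠ 0 := by positivity
  field_simp
  ring
  rw [show (1:ℝ) + ↑k * ρ = ↑k * ρ + 1 by ring, show (1:ℝ) - ↑k * ρ + ρ * ↑n = (↑n - ↑k) * ρ + 1 by ring]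
  exact mul_inv_cancel₀ hB.ne'
end

lemma sum_w_bernP (m : ℕ) (w : ℕ → ℝ) (α x : ℝ) :
    ∑ k ∈ range (m + 3), w k * bernP (m + 2) k α x
      = (1 - α) * (1 - x) * (∑ j ∈ range (m + 1), w j * bb m j x)
        + (1 - α) * x * (∑ j ∈ range (m + 1), w (j + 2) * bb m j x)
        + α * ∑ k ∈ range (m + 3), w k * bb (m + 2) k x := by
  have expand : ∀ k, w k * bernP (m + 2) k α x
      = w k * (((m).choose k : ℝ) * (1 - α) * x ^ k * (1 - x) ^ (m + 1 - k))
        + w k * ((if 2 ≤ k then (((m).choose (k - 2)) : ℝ) else 0) * (1 - α) * x ^ (k - 1) * (1 - x) ^ (m + 2 - k))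
        + w k * (((m+2).choose k : ℝ) * α * x ^ k * (1 - x) ^ (m + 2 - k)) := by
    intro k
    simp only [bernP, Nat.add_sub_cancel, show m + 2 - k - 1 = m + 1 - k from by omega]
    ring
  simp_rw [expand, Finset.sum_add_distrib]
  congr 1
  · congr 1
    -- first sum
    · rw [← Finset.sum_subset (Finset.range_subset_range.mpr (by omega : m + 1 ≤ m + 3))]
      · rw [Finset.mul_sum]
        refine Finset.sum_congr rfl fun k hk => ?_
        rw [Finset.mem_range] at hk
        have hk' : k ≤ m := by omega
        have : m + 1 - k = (m - k) + 1 := by omega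
        rw [this, bb, pow_succ]
        ring
      · intro k hk hk'
        rw [Finset.mem_range] at hk
        rw [Finset.mem_range, not_lt] at hk'
        rw [Nat.choose_eq_zero_of_lt (by omega : m < k)]
        simp
    -- second sum
    · rw [← Finset.sum_subset (by intro k hk; rw [Finset.mem_Ico] at hk; rw [Finset.mem_range]; omega :
          Finset.Ico 2 (m + 3) ⊆ Finset.range (m + 3))]
      · rw [Finset.sum_Ico_eq_sum_range]
        simp only [show m + 3 - 2 = m + 1 from rfl]
        rw [Finset.mul_sum]
        refine Finset.sum_congr rfl fun j hj => ?_
        rw [Finset.mem_range] at hj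
        have h1 : 2 ≤ 2 + j := by omega
        rw [if_pos h1]
        have e1 : 2 + j - 2 = j := by omega
        have e2 : 2 + j - 1 = j + 1 := by omega
        have e3 : m + 2 - (2 + j) = m - j := by omega
        rw [e1, e2, e3, bb, pow_succ, show 2 + j = j + 2 from by omega]
        ring
      · intro k hk hk'
        rw [Finset.mem_range] at hk
        rw [Finset.mem_Ico, not_and_or, not_le] at hk'
        have : k < 2 := by omega
        rw [if_neg (by omega)]
        simp
  -- third sum
  · rw [Finset.mul_sum]
    exact Finset.sum_congr rfl fun k _ => by simp only [bb]; ring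

lemma sum_quad_bernP (m : ℕ) (α x p q r : ℝ) :
    ∑ k ∈ range (m + 3), (p * (k:ℝ)^2 + q * (k:ℝ) + r) * bernP (m + 2) k α x
      = p * ((((m:ℝ)+2)^2 - ((m:ℝ)+2)) * x^2 + ((m:ℝ)+2) * x + 2*(1-α)*x*(1-x))
        + q * (((m:ℝ)+2) * x) + r := by
  rw [sum_w_bernP]
  have e1 : ∑ j ∈ range (m + 1), (p * (j:ℝ)^2 + q * (j:ℝ) + r) * bb m j x
      = p * ((m:ℝ)*((m:ℝ)-1)*x^2 + m*x) + q * ((m:ℝ)*x) + r := by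
    simp_rw [add_mul, Finset.sum_add_distrib, mul_assoc, ← Finset.mul_sum]
    rw [sum_k2_bb, sum_k_bb, sum_bb, mul_one]
    ring
  have e2 : ∑ j ∈ range (m + 1), (p * ((j:ℝ)+2)^2 + q * ((j:ℝ)+2) + r) * bb m j x
      = p * (((m:ℝ)*((m:ℝ)-1)*x^2 + m*x) + 4*((m:ℝ)*x) + 4) + q * (((m:ℝ)*x) + 2) + r := by
    have : ∀ j : ℕ, (p * ((j:ℝ)+2)^2 + q * ((j:ℝ)+2) + r) * bb m j x
        = p * ((j:ℝ)^2 * bb m j x) + (4*p + q) * ((j:ℝ) * bb m j x) + (4*p + 2*q + r) * bb m j x := by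
      intro j; ring
    simp_rw [this, Finset.sum_add_distrib, ← Finset.mul_sum]
    rw [sum_k2_bb, sum_k_bb, sum_bb, mul_one]
    ring
  have e2' : ∑ j ∈ range (m + 1), (p * ((j:ℕ)+2:ℕ)^2 + q * (((j:ℕ)+2:ℕ):ℝ) + r) * bb m j x
      = p * (((m:ℝ)*((m:ℝ)-1)*x^2 + m*x) + 4*((m:ℝ)*x) + 4) + q * (((m:ℝ)*x) + 2) + r := by
    rw [← e2]
    refine Finset.sum_congr rfl fun j _ => ?_
    push_cast
    ring
  have e3 : ∑ k ∈ range (m + 3), (p * (k:ℝ)^2 + q * (k:ℝ) + r) * bb (m+2) k x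
      = p * (((m:ℝ)+2)*(((m:ℝ)+2)-1)*x^2 + ((m:ℝ)+2)*x) + q * (((m:ℝ)+2)*x) + r := by
    simp_rw [add_mul, Finset.sum_add_distrib, mul_assoc, ← Finset.mul_sum]
    have h2 := sum_k2_bb (m+2) x
    have h1 := sum_k_bb (m+2) x
    have h0 := sum_bb (m+2) x
    push_cast at h2 h1 h0 ⊢
    rw [h2, h1, h0, mul_one]
    ring
  rw [e1, e2', e3]
  push_cast
  ring

lemma sum_one_bernP (m : ℕ) (α x : ℝ) :
    ∑ k ∈ range (m + 3), bernP (m + 2) k α x = 1 := by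
  have := sum_quad_bernP m α x 0 0 1
  simpa using this

section
variable {n k : ℕ} {ρ α x : ℝ}

lemma bernP_nonneg (hk : 0 ≤ α) (hk2 : α ≤ 1) (hx : 0 ≤ x) (hx2 : x ≤ 1) :
    0 ≤ bernP n k α x := by
  have h1 : (0:ℝ) ≤ 1 - α := by linarith
  have h2 : (0:ℝ) ≤ 1 - x := by linarith
  refine add_nonneg (add_nonneg ?_ ?_) ?_
  · positivity
  · refine mul_nonneg (mul_nonneg (mul_nonneg ?_ h1) (by positivity)) (by positivity)
    split <;> positivity
  · positivity

lemma rpow_contOn (c : ℝ) (hc : 0 ≤ c) : ContinuousOn (fun t : ℝ => t ^ c) (Set.Icc 0 1) :=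
  fun t _ => (Real.continuousAt_rpow_const t c (Or.inr hc)).continuousWithinAt

lemma muD_contOn (hk : k ≤ n) (hρ : 0 < ρ) : ContinuousOn (muD n k ρ) (Set.Icc 0 1) := by
  have ha : (0:ℝ) ≤ (k:ℝ)*ρ := by positivity
  have hb : (0:ℝ) ≤ ((n:ℝ)-(k:ℝ))*ρ := by
    have : (k:ℝ) ≤ (n:ℝ) := Nat.cast_le.mpr hk
    nlinarith
  apply ContinuousOn.div_const
  apply ContinuousOn.mul (rpow_contOn _ ha)
  intro t ht
  have : ContinuousAt (fun t : ℝ => (1 - t) ^ (((n:ℝ)-(k:ℝ))*ρ)) t := by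
    exact (Real.continuousAt_rpow_const (1-t) _ (Or.inr hb)).comp
      ((continuous_const.sub continuous_id).continuousAt)
  exact this.continuousWithinAt

lemma muD_nonneg (hk : k ≤ n) (hρ : 0 < ρ) {t : ℝ} (ht : t ∈ Set.Icc (0:ℝ) 1) :
    0 ≤ muD n k ρ t := by
  have hkn : (k:ℝ) ≤ (n:ℝ) := Nat.cast_le.mpr hk
  have hB : 0 < betaR ((k:ℝ)*ρ + 1) (((n:ℝ)-(k:ℝ))*ρ + 1) :=
    betaR_pos_s12 (by positivity) (by nlinarith)
  exact div_nonneg (mul_nonneg (Real.rpow_nonneg ht.1 _)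
    (Real.rpow_nonneg (by linarith [ht.2]) _)) hB.le

lemma muD_mul_intble (hk : k ≤ n) (hρ : 0 < ρ) {g : ℝ → ℝ}
    (hg : ContinuousOn g (Set.Icc 0 1)) :
    IntervalIntegrable (fun t => muD n k ρ t * g t) volume 0 1 := by
  apply ContinuousOn.intervalIntegrable
  rw [Set.uIcc_of_le (by norm_num : (0:ℝ) ≤ 1)]
  exact (muD_contOn hk hρ).mul hg
end

section
variable {n k : ℕ} {ρ : ℝ}

lemma I_quad (hk : k ≤ n) (hρ : 0 < ρ) (A B C : ℝ) :
    ∫ t in (0:ℝ)..1, muD n k ρ t * (A + B*t + C*t^2)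
      = A + B * (((k:ℝ)*ρ+1)/((n:ℝ)*ρ+2))
        + C * (((k:ℝ)*ρ+1)*((k:ℝ)*ρ+2)/((((n:ℝ)*ρ+2))*((n:ℝ)*ρ+3))) := by
  have i1 : IntervalIntegrable (fun t => muD n k ρ t * A) volume 0 1 :=
    muD_mul_intble hk hρ continuous_const.continuousOn
  have i2 : IntervalIntegrable (fun t => muD n k ρ t * (t * B)) volume 0 1 :=
    muD_mul_intble hk hρ (by fun_prop)
  have i3 : IntervalIntegrable (fun t => muD n k ρ t * (t^2 * C)) volume 0 1 :=
    muD_mul_intble hk hρ (by fun_prop)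
  have h1 : (fun t => muD n k ρ t * (A + B*t + C*t^2))
      = fun t => muD n k ρ t * A + (muD n k ρ t * (t * B) + muD n k ρ t * (t^2 * C)) :=
    funext fun t => by ring
  rw [h1, intervalIntegral.integral_add i1 (i2.add i3), intervalIntegral.integral_add i2 i3]
  have e1 : (fun t => muD n k ρ t * (t * B)) = fun t => (muD n k ρ t * t) * B :=
    funext fun t => by ring
  have e2 : (fun t => muD n k ρ t * (t^2 * C)) = fun t => (muD n k ρ t * t^2) * C :=
    funext fun t => by ring
  rw [e1, e2, intervalIntegral.integral_mul_const, intervalIntegral.integral_mul_const,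
    intervalIntegral.integral_mul_const, muD_m0 hk hρ, muD_m1 hk hρ, muD_m2 hk hρ]
  ring
end

lemma quad_bound (nn x α ρ Cc εh : ℝ) (hnn : 2 ≤ nn) (hx0 : 0 ≤ x) (hx1 : x ≤ 1)
    (hα0 : 0 ≤ α) (hα1 : α ≤ 1) (hρ : 0 < ρ) (hC : 0 ≤ Cc) :
    (Cc*ρ^2/((nn*ρ+2)*(nn*ρ+3))) * ((nn^2 - nn)*x^2 + nn*x + 2*(1-α)*x*(1-x))
      + ((-2*Cc*x)*ρ/(nn*ρ+2) + Cc*(3*ρ)/((nn*ρ+2)*(nn*ρ+3))) * (nn*x)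
      + ((εh + Cc*x^2) + (-2*Cc*x)/(nn*ρ+2) + Cc*2/((nn*ρ+2)*(nn*ρ+3)))
      ≤ εh + Cc*((ρ^2/2+ρ/4+1)/ρ^2)/nn := by
  have hD : (0:ℝ) < nn*ρ+2 := by nlinarith
  have hE : (0:ℝ) < nn*ρ+3 := by nlinarith
  set N' : ℝ := nn*(ρ^2+ρ)*(x*(1-x)) + 2*ρ^2*(1-α)*(x*(1-x)) + 2*(1-3*x+3*x^2) with hN'
  have key : (Cc*ρ^2/((nn*ρ+2)*(nn*ρ+3))) * ((nn^2 - nn)*x^2 + nn*x + 2*(1-α)*x*(1-x))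
      + ((-2*Cc*x)*ρ/(nn*ρ+2) + Cc*(3*ρ)/((nn*ρ+2)*(nn*ρ+3))) * (nn*x)
      + ((εh + Cc*x^2) + (-2*Cc*x)/(nn*ρ+2) + Cc*2/((nn*ρ+2)*(nn*ρ+3)))
      = εh + Cc * N' / ((nn*ρ+2)*(nn*ρ+3)) := by
    rw [hN']
    field_simp
    ring
  rw [key]
  clear key
  have hxx : 0 ≤ x*(1-x) := by nlinarith
  have hN'0 : 0 ≤ N' := by
    rw [hN']
    have h3 : (0:ℝ) ≤ 1-3*x+3*x^2 := by nlinarith [sq_nonneg (2*x-1)]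
    have : (0:ℝ) ≤ 1 - α := by linarith
    positivity
  have hN'le : N' ≤ nn * (ρ^2/2+ρ/4+1) := by
    rw [hN']
    have hu : x*(1-x) ≤ 1/4 := by nlinarith [sq_nonneg (2*x-1)]
    have h1 : nn*(ρ^2+ρ)*(x*(1-x)) ≤ nn*(ρ^2+ρ)*(1/4) :=
      mul_le_mul_of_nonneg_left hu (mul_nonneg (by linarith) (by positivity))
    have h2a : (1-α)*(x*(1-x)) ≤ 1/4 := by
      have := mul_le_mul_of_nonneg_right (show (1-α) ≤ 1 by linarith) hxx
      linarith
    have h2 : 2*ρ^2*((1-α)*(x*(1-x))) ≤ 2*ρ^2*(1/4) :=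
      mul_le_mul_of_nonneg_left h2a (by positivity)
    have h3 : 2*ρ^2 ≤ nn*ρ^2 := mul_le_mul_of_nonneg_right hnn (sq_nonneg ρ)
    linarith
  have hnn0 : (0:ℝ) < nn := by linarith
  have hDE : nn^2*ρ^2 ≤ (nn*ρ+2)*(nn*ρ+3) := by nlinarith [mul_pos hnn0 hρ]
  have hnn2 : (0:ℝ) < nn^2*ρ^2 := by positivity
  have step1 : Cc * N' / ((nn*ρ+2)*(nn*ρ+3)) ≤ Cc * (nn * (ρ^2/2+ρ/4+1)) / (nn^2*ρ^2) :=
    div_le_div₀ (by positivity) (mul_le_mul_of_nonneg_left hN'le hC) hnn2 hDE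
  have step2 : Cc * (nn * (ρ^2/2+ρ/4+1)) / (nn^2*ρ^2) = Cc*((ρ^2/2+ρ/4+1)/ρ^2)/nn := by
    field_simp
  linarith

set_option maxHeartbeats 2000000 in
theorem G_tendstoUniformlyOn (f : ℝ → ℝ) (hf : ContinuousOn f (Set.Icc (0:ℝ) 1))
    (α ρ : ℝ) (hα : α ∈ Set.Icc (0:ℝ) 1) (hρ : 0 < ρ) :
    TendstoUniformlyOn (fun n : ℕ => fun x => G n α ρ f x) f
      Filter.atTop (Set.Icc (0:ℝ) 1) := by
  obtain ⟨hα0, hα1⟩ := hα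
  rw [Metric.tendstoUniformlyOn_iff]
  intro ε hε
  obtain ⟨M, hM⟩ : ∃ M, ∀ t ∈ Set.Icc (0:ℝ) 1, |f t| ≤ M :=
    isCompact_Icc.exists_bound_of_continuousOn hf
  have hM0 : 0 ≤ M := le_trans (abs_nonneg _) (hM 0 (by norm_num))
  have huc := isCompact_Icc.uniformContinuousOn_of_continuous hf
  rw [Metric.uniformContinuousOn_iff] at huc
  obtain ⟨δ, hδ0, hδ⟩ := huc (ε/2) (by linarith)
  set C : ℝ := 2*M/δ^2 with hCdef
  have hC0 : 0 ≤ C := by positivity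
  set K : ℝ := (ρ^2/2+ρ/4+1)/ρ^2 with hKdef
  have hK0 : 0 < K := by positivity
  -- pointwise modulus bound
  have key : ∀ t ∈ Set.Icc (0:ℝ) 1, ∀ x ∈ Set.Icc (0:ℝ) 1,
      |f t - f x| ≤ ε/2 + C*(t-x)^2 := by
    intro t ht x hx
    by_cases h : dist t x < δ
    · have h2 := hδ t ht x hx h
      rw [Real.dist_eq] at h2
      have : 0 ≤ C*(t-x)^2 := by positivity
      linarith [h2.le]
    · rw [Real.dist_eq, not_lt] at h
      have hsq : δ^2 ≤ (t-x)^2 := by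
        have := abs_nonneg (t-x)
        nlinarith [sq_abs (t-x)]
      have hC2 : 2*M ≤ C * (t-x)^2 := by
        rw [hCdef, div_mul_eq_mul_div, le_div_iff₀ (by positivity : (0:ℝ) < δ^2)]
        nlinarith
      have := abs_sub (f t) (f x)
      have h1 := hM t ht
      have h2 := hM x hx
      have habs : |f t - f x| ≤ 2*M := by
        calc |f t - f x| ≤ |f t| + |f x| := abs_sub _ _
          _ ≤ 2*M := by linarith
      linarith
  obtain ⟨N₀, hN₀⟩ := exists_nat_gt (2*C*K/ε)
  filter_upwards [Filter.eventually_ge_atTop (max N₀ 2)] with n hn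
  intro x hx
  obtain ⟨hx0, hx1⟩ := hx
  have hn2 : 2 ≤ n := le_trans (le_max_right _ _) hn
  have hnN : N₀ ≤ n := le_trans (le_max_left _ _) hn
  obtain ⟨m, rfl⟩ : ∃ m, n = m + 2 := ⟨n - 2, by omega⟩
  set nn : ℝ := (m:ℝ) + 2 with hnn
  have hnn2 : (2:ℝ) ≤ nn := by
    rw [hnn]; linarith [show (0:ℝ) ≤ (m:ℝ) from Nat.cast_nonneg m]
  have hnn0 : (0:ℝ) < nn := by linarith
  -- the per-k integral bound
  set A : ℝ := ε/2 + C*x^2 with hA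
  set B : ℝ := -2*C*x with hB
  have hperk : ∀ k ∈ range (m+3), |(∫ t in (0:ℝ)..1, muD (m+2) k ρ t * f t) - f x|
      ≤ ∫ t in (0:ℝ)..1, muD (m+2) k ρ t * (A + B*t + C*t^2) := by
    intro k hk
    rw [Finset.mem_range] at hk
    have hk' : k ≤ m + 2 := by omega
    have if_ : IntervalIntegrable (fun t => muD (m+2) k ρ t * f t) volume 0 1 :=
      muD_mul_intble hk' hρ hf
    have ic : IntervalIntegrable (fun t => muD (m+2) k ρ t * f x) volume 0 1 :=
      muD_mul_intble hk' hρ continuous_const.continuousOn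
    have h1 : (∫ t in (0:ℝ)..1, muD (m+2) k ρ t * f t) - f x
        = ∫ t in (0:ℝ)..1, muD (m+2) k ρ t * (f t - f x) := by
      have : (fun t => muD (m+2) k ρ t * (f t - f x))
          = fun t => muD (m+2) k ρ t * f t - muD (m+2) k ρ t * f x := funext fun t => by ring
      rw [this, intervalIntegral.integral_sub if_ ic]
      have : (fun t => muD (m+2) k ρ t * f x) = fun t => f x * muD (m+2) k ρ t :=
        funext fun t => by ring
      rw [this, intervalIntegral.integral_const_mul, muD_m0 hk' hρ, mul_one]
    rw [h1]
    have habs1 : |∫ t in (0:ℝ)..1, muD (m+2) k ρ t * (f t - f x)|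
        ≤ ∫ t in (0:ℝ)..1, |muD (m+2) k ρ t * (f t - f x)| :=
      intervalIntegral.abs_integral_le_integral_abs (by norm_num)
    refine le_trans habs1 ?_
    apply intervalIntegral.integral_mono_on (by norm_num)
    · have : ContinuousOn (fun t => muD (m+2) k ρ t * (f t - f x)) (Set.Icc 0 1) :=
        (muD_contOn hk' hρ).mul (hf.sub continuousOn_const)
      apply ContinuousOn.intervalIntegrable
      rw [Set.uIcc_of_le (by norm_num : (0:ℝ) ≤ 1)]
      exact this.abs
    · exact muD_mul_intble hk' hρ (by fun_prop)
    · intro t ht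
      rw [abs_mul, abs_of_nonneg (muD_nonneg hk' hρ ht)]
      apply mul_le_mul_of_nonneg_left _ (muD_nonneg hk' hρ ht)
      have := key t ht x ⟨hx0, hx1⟩
      rw [hA, hB]
      calc |f t - f x| ≤ ε/2 + C*(t-x)^2 := this
        _ = ε/2 + C*x^2 + (-2*C*x)*t + C*t^2 := by ring
  -- assemble
  have hsum1 := sum_one_bernP m α x
  have hGsub : G (m+2) α ρ f x - f x
      = ∑ k ∈ range (m+3), bernP (m+2) k α x
          * ((∫ t in (0:ℝ)..1, muD (m+2) k ρ t * f t) - f x) := by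
    rw [show G (m+2) α ρ f x = ∑ k ∈ range (m+3), bernP (m+2) k α x
        * ∫ t in (0:ℝ)..1, muD (m+2) k ρ t * f t from rfl]
    simp_rw [mul_sub, Finset.sum_sub_distrib, ← Finset.sum_mul, hsum1, one_mul]
  have habs : |G (m+2) α ρ f x - f x|
      ≤ ∑ k ∈ range (m+3), bernP (m+2) k α x
          * (∫ t in (0:ℝ)..1, muD (m+2) k ρ t * (A + B*t + C*t^2)) := by
    rw [hGsub]
    refine le_trans (Finset.abs_sum_le_sum_abs _ _) ?_
    apply Finset.sum_le_sum
    intro k hk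
    rw [abs_mul, abs_of_nonneg (bernP_nonneg hα0 hα1 hx0 hx1)]
    exact mul_le_mul_of_nonneg_left (hperk k hk) (bernP_nonneg hα0 hα1 hx0 hx1)
  -- evaluate the integrals and the sum
  have heval : ∑ k ∈ range (m+3), bernP (m+2) k α x
      * (∫ t in (0:ℝ)..1, muD (m+2) k ρ t * (A + B*t + C*t^2))
      ≤ ε/2 + C*K/nn := by
    have hrw : ∀ k ∈ range (m+3), bernP (m+2) k α x
        * (∫ t in (0:ℝ)..1, muD (m+2) k ρ t * (A + B*t + C*t^2))
        = ((C*ρ^2/((nn*ρ+2)*(nn*ρ+3))) * (k:ℝ)^2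
          + (B*ρ/(nn*ρ+2) + C*(3*ρ)/((nn*ρ+2)*(nn*ρ+3))) * (k:ℝ)
          + (A + B/(nn*ρ+2) + C*2/((nn*ρ+2)*(nn*ρ+3)))) * bernP (m+2) k α x := by
      intro k hk
      rw [Finset.mem_range] at hk
      have hk' : k ≤ m + 2 := by omega
      rw [I_quad hk' hρ A B C]
      have hD : (0:ℝ) < nn*ρ+2 := by nlinarith
      have hE : (0:ℝ) < nn*ρ+3 := by nlinarith
      have hcast : ((m+2:ℕ):ℝ) = nn := by rw [hnn]; push_cast; ring
      rw [hcast]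
      have hscalar : A + B * (((k:ℝ)*ρ+1)/(nn*ρ+2))
          + C * (((k:ℝ)*ρ+1)*((k:ℝ)*ρ+2)/((nn*ρ+2)*(nn*ρ+3)))
          = (C*ρ^2/((nn*ρ+2)*(nn*ρ+3))) * (k:ℝ)^2
            + (B*ρ/(nn*ρ+2) + C*(3*ρ)/((nn*ρ+2)*(nn*ρ+3))) * (k:ℝ)
            + (A + B/(nn*ρ+2) + C*2/((nn*ρ+2)*(nn*ρ+3))) := by
        field_simp
        ring
      rw [hscalar, mul_comm]
    rw [Finset.sum_congr rfl hrw, sum_quad_bernP]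
    have hcast2 : ((m:ℝ)+2) = nn := by rw [hnn]
    rw [hcast2]
    have := quad_bound nn x α ρ C (ε/2) hnn2 hx0 hx1 hα0 hα1 hρ hC0
    calc (C*ρ^2/((nn*ρ+2)*(nn*ρ+3))) * ((nn^2 - nn)*x^2 + nn*x + 2*(1-α)*x*(1-x))
          + (B*ρ/(nn*ρ+2) + C*(3*ρ)/((nn*ρ+2)*(nn*ρ+3))) * (nn*x)
          + (A + B/(nn*ρ+2) + C*2/((nn*ρ+2)*(nn*ρ+3)))
        = (C*ρ^2/((nn*ρ+2)*(nn*ρ+3))) * ((nn^2 - nn)*x^2 + nn*x + 2*(1-α)*x*(1-x))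
          + ((-2*C*x)*ρ/(nn*ρ+2) + C*(3*ρ)/((nn*ρ+2)*(nn*ρ+3))) * (nn*x)
          + ((ε/2 + C*x^2) + (-2*C*x)/(nn*ρ+2) + C*2/((nn*ρ+2)*(nn*ρ+3))) := by
            rw [hA, hB]
      _ ≤ ε/2 + C*((ρ^2/2+ρ/4+1)/ρ^2)/nn := this
      _ = ε/2 + C*K/nn := by rw [hKdef]
  -- final numeric step
  have hfin : C*K/nn < ε/2 := by
    rw [div_lt_iff₀ hnn0]
    have hN0 : (N₀:ℝ) ≤ nn := by
      rw [hnn]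
      have : (N₀:ℝ) ≤ ((m+2:ℕ):ℝ) := Nat.cast_le.mpr hnN
      push_cast at this ⊢
      linarith
    have h1 : 2*C*K/ε < (N₀:ℝ) := hN₀
    rw [div_lt_iff₀ hε] at h1
    nlinarith
  rw [Real.dist_eq, abs_sub_comm]
  calc |G (m+2) α ρ f x - f x| ≤ ∑ k ∈ range (m+3), bernP (m+2) k α x
      * (∫ t in (0:ℝ)..1, muD (m+2) k ρ t * (A + B*t + C*t^2)) := habs
    _ ≤ ε/2 + C*K/nn := heval
    _ < ε/2 + ε/2 := by linarith
    _ = ε := by ring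
end
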